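/- Let 0 ≤ ε < δ/31 with δ ≤ 1/7. Suppose C₁ satisfies (1 + (3/4)δ(1−ε)²)(1−ε)² ≤ C₁ ≤ (1 + (3/4)δ(1+ε)²)(1+ε)². Then (1+ε)/(1−δ/2) < C₁ < ((1−ε)/(1+ε))·(1/(1−δ)). -/
import Mathlib


set_option maxHeartbeats 1000000 in
/-- Bounds on `C₁`, the weakly computed value of `1 + (3/4)δ`. -/
theorem C1_bounds (ε δ C₁ : ℝ) (hε0 : 0 ≤ ε) (hε : ε < δ / 31) (hδ : δ ≤ 1 / 7)
    (hlo : (1 + (3 / 4) * δ * (1 - ε) ^ 2) * (1 - ε) ^ 2 ≤ C₁)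
    (hhi : C₁ ≤ (1 + (3 / 4) * δ * (1 + ε) ^ 2) * (1 + ε) ^ 2) :
    (1 + ε) / (1 - δ / 2) < C₁ ∧ C₁ < ((1 - ε) / (1 + ε)) * (1 / (1 - δ)) := by
  have hδ0 : 0 < δ := by linarith
  have hεs : ε < 1 / 217 := by linarith
  have h1 : (0:ℝ) < 1 - δ / 2 := by linarith
  have h2 : (0:ℝ) < 1 - δ := by linarith
  have h3 : (0:ℝ) < 1 + ε := by linarith
  have hsq1 : (1:ℝ) - 2 * ε ≤ (1 - ε) ^ 2 := by nlinarith [sq_nonneg ε]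
  have hsq2 : (1 + ε) ^ 2 ≤ 1 + 3 * ε := by nlinarith
  have hL : (1 + (3 / 4) * δ * (1 - 2 * ε)) * (1 - 2 * ε) ≤
      (1 + (3 / 4) * δ * (1 - ε) ^ 2) * (1 - ε) ^ 2 := by
    nlinarith [sq_nonneg (1 - ε), mul_nonneg hδ0.le hε0]
  have hH : (1 + (3 / 4) * δ * (1 + ε) ^ 2) * (1 + ε) ^ 2 ≤
      (1 + (3 / 4) * δ * (1 + 3 * ε)) * (1 + 3 * ε) := by
    nlinarith [sq_nonneg (1 + ε), mul_nonneg hδ0.le hε0]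
  constructor
  · rw [div_lt_iff₀ h1]
    have key : 1 + ε < (1 + (3 / 4) * δ * (1 - 2 * ε)) * (1 - 2 * ε) * (1 - δ / 2) := by
      nlinarith [mul_nonneg hε0 hδ0.le, mul_nonneg (mul_nonneg hε0 hδ0.le) hδ0.le,
        mul_nonneg (mul_nonneg hε0 hε0) hδ0.le, mul_pos hδ0 hδ0,
        mul_nonneg (mul_nonneg hδ0.le hδ0.le) hδ0.le, mul_nonneg hε0 hε0]
    calc 1 + ε < (1 + (3 / 4) * δ * (1 - 2 * ε)) * (1 - 2 * ε) * (1 - δ / 2) := key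
    _ ≤ (1 + (3 / 4) * δ * (1 - ε) ^ 2) * (1 - ε) ^ 2 * (1 - δ / 2) :=
        mul_le_mul_of_nonneg_right hL h1.le
    _ ≤ C₁ * (1 - δ / 2) := mul_le_mul_of_nonneg_right hlo h1.le
  · rw [div_mul_div_comm, mul_one, lt_div_iff₀ (by positivity : (0:ℝ) < (1 + ε) * (1 - δ))]
    have hpos : (0:ℝ) < (1 + ε) * (1 - δ) := by positivity
    have ha : (0:ℝ) ≤ δ - 31 * ε := by linarith
    have hb : (0:ℝ) ≤ 1 / 7 - δ := by linarith
    have hc : (0:ℝ) ≤ 1 / 217 - ε := by linarith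
    have key2 : (1 + (3 / 4) * δ * (1 + 3 * ε)) * (1 + 5 * ε) * (1 - δ) < 1 - ε := by
      nlinarith [mul_nonneg hb hε0, mul_nonneg (mul_nonneg hb hε0) hε0,
        mul_nonneg hε0 hc, mul_pos hδ0 hδ0,
        mul_nonneg (mul_nonneg hδ0.le hδ0.le) hε0, sq_nonneg (δ * ε)]
    have hA : (0:ℝ) ≤ 1 + (3 / 4) * δ * (1 + 3 * ε) := by positivity
    have key : (1 + (3 / 4) * δ * (1 + 3 * ε)) * (1 + 3 * ε) * ((1 + ε) * (1 - δ)) < 1 - ε := by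
      have h5 : (1 + 3 * ε) * (1 + ε) ≤ 1 + 5 * ε := by nlinarith
      calc (1 + (3 / 4) * δ * (1 + 3 * ε)) * (1 + 3 * ε) * ((1 + ε) * (1 - δ))
          = (1 + (3 / 4) * δ * (1 + 3 * ε)) * ((1 + 3 * ε) * (1 + ε)) * (1 - δ) := by ring
        _ ≤ (1 + (3 / 4) * δ * (1 + 3 * ε)) * (1 + 5 * ε) * (1 - δ) := by
            apply mul_le_mul_of_nonneg_right _ h2.le
            exact mul_le_mul_of_nonneg_left h5 hA
        _ < 1 - ε := key2
    calc C₁ * ((1 + ε) * (1 - δ))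
        ≤ (1 + (3 / 4) * δ * (1 + ε) ^ 2) * (1 + ε) ^ 2 * ((1 + ε) * (1 - δ)) :=
        mul_le_mul_of_nonneg_right hhi hpos.le
    _ ≤ (1 + (3 / 4) * δ * (1 + 3 * ε)) * (1 + 3 * ε) * ((1 + ε) * (1 - δ)) :=
        mul_le_mul_of_nonneg_right hH hpos.le
    _ < 1 - ε := key
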